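/- Let ρ be the canonical two-qubit state with parameters mx, my, mz, m'x, m'y, m'z, Cxx, Cyy, Czz, assumed positive semidefinite, and assume Re(trace ρ₊) ≠ 0 and Re(trace ρ₋) ≠ 0. Then for Bob's σy measurement, P₊(Π_y) − P₋(Π_y) = 2·(Cyy − my·m'y)·(−3 + cos(2α))·sin α / ((−3 + cos(2α) + 4·my·sin α)·(1 + 2·my·sin α + sin²α)). In particular the difference vanishes whenever Cyy = my·m'y, and in particular whenever Cyy = 0 and my = 0. -/

import Mathlib

open Matrix Kronecker Complex
open scoped ComplexOrder

noncomputable section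

/-- Pauli matrix `σx`. -/
def σx : Matrix (Fin 2) (Fin 2) ℂ := !![0, 1; 1, 0]

/-- Pauli matrix `σy`. -/
def σy : Matrix (Fin 2) (Fin 2) ℂ := !![0, -Complex.I; Complex.I, 0]

/-- Pauli matrix `σz`. -/
def σz : Matrix (Fin 2) (Fin 2) ℂ := !![1, 0; 0, -1]

/-- The simulated PT-symmetric evolution operator at the chosen time. -/
def Upt (α : ℝ) : Matrix (Fin 2) (Fin 2) ℂ :=
  !![(Real.sin α : ℂ), -Complex.I; -Complex.I, -(Real.sin α : ℂ)]

/-- Alice's operation `A₊` (do nothing). -/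
def Apos : Matrix (Fin 2) (Fin 2) ℂ := 1

/-- Alice's operation `A₋` (bit flip `σx`). -/
def Aneg : Matrix (Fin 2) (Fin 2) ℂ := σx

/-- Unnormalized post-selected state after Alice applies `A₊` followed by the
simulated PT evolution. -/
def postPlus (α : ℝ) (ρ : Matrix (Fin 2 × Fin 2) (Fin 2 × Fin 2) ℂ) :
    Matrix (Fin 2 × Fin 2) (Fin 2 × Fin 2) ℂ :=
  ((Upt α * Apos) ⊗ₖ (1 : Matrix (Fin 2) (Fin 2) ℂ)) * ρ *
    ((Upt α * Apos) ⊗ₖ (1 : Matrix (Fin 2) (Fin 2) ℂ))ᴴ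

/-- Unnormalized post-selected state after Alice applies `A₋` followed by the
simulated PT evolution. -/
def postMinus (α : ℝ) (ρ : Matrix (Fin 2 × Fin 2) (Fin 2 × Fin 2) ℂ) :
    Matrix (Fin 2 × Fin 2) (Fin 2 × Fin 2) ℂ :=
  ((Upt α * Aneg) ⊗ₖ (1 : Matrix (Fin 2) (Fin 2) ℂ)) * ρ *
    ((Upt α * Aneg) ⊗ₖ (1 : Matrix (Fin 2) (Fin 2) ℂ))ᴴ

/-- Probability that Bob obtains outcome `Π` given Alice applied `A₊`. -/
def Pplus (α : ℝ) (ρ : Matrix (Fin 2 × Fin 2) (Fin 2 × Fin 2) ℂ)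
    (Pi : Matrix (Fin 2) (Fin 2) ℂ) : ℝ :=
  ((((1 : Matrix (Fin 2) (Fin 2) ℂ) ⊗ₖ Pi) * postPlus α ρ).trace).re /
    ((postPlus α ρ).trace).re

/-- Probability that Bob obtains outcome `Π` given Alice applied `A₋`. -/
def Pminus (α : ℝ) (ρ : Matrix (Fin 2 × Fin 2) (Fin 2 × Fin 2) ℂ)
    (Pi : Matrix (Fin 2) (Fin 2) ℂ) : ℝ :=
  ((((1 : Matrix (Fin 2) (Fin 2) ℂ) ⊗ₖ Pi) * postMinus α ρ).trace).re /
    ((postMinus α ρ).trace).re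

/-- Bob's `σy`-measurement projector onto `|+_y⟩ = (|0⟩ + i|1⟩)/√2`. -/
def Piy : Matrix (Fin 2) (Fin 2) ℂ :=
  (1/2 : ℂ) • !![1, -Complex.I; Complex.I, 1]

/-- Bob's rank-one projector `Π(z,u)` for an arbitrary projective measurement. -/
def Pizu (z u : ℝ) : Matrix (Fin 2) (Fin 2) ℂ :=
  !![((Real.cos (z/2))^2 : ℂ),
     (Real.cos (z/2) : ℂ) * (Real.sin (z/2) : ℂ) * Complex.exp (-(Complex.I * u));
     (Real.cos (z/2) : ℂ) * (Real.sin (z/2) : ℂ) * Complex.exp (Complex.I * u),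
     ((Real.sin (z/2))^2 : ℂ)]

/-- The single-qubit state `|+⟩ = (|0⟩ + |1⟩)/√2`. -/
def ketPlus : Fin 2 → ℂ := ![((1 / Real.sqrt 2 : ℝ) : ℂ), ((1 / Real.sqrt 2 : ℝ) : ℂ)]

/-- The single-qubit state `|−⟩ = (|0⟩ − |1⟩)/√2`. -/
def ketMinus : Fin 2 → ℂ := ![((1 / Real.sqrt 2 : ℝ) : ℂ), ((-(1 / Real.sqrt 2) : ℝ) : ℂ)]

/-- The (normalized) pure state `|ψ_{β,γ}⟩ = (β|++⟩ + γ|−−⟩)/√(β²+γ²)`. -/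
def ψpure (β γ : ℝ) : Fin 2 × Fin 2 → ℂ := fun q =>
  ((β : ℂ) * (ketPlus q.1 * ketPlus q.2) + (γ : ℂ) * (ketMinus q.1 * ketMinus q.2)) /
    ((Real.sqrt (β^2 + γ^2) : ℝ) : ℂ)

/-- The pure two-qubit density matrix `ρ_{β,γ} = |ψ_{β,γ}⟩⟨ψ_{β,γ}|`. -/
def ρpure (β γ : ℝ) : Matrix (Fin 2 × Fin 2) (Fin 2 × Fin 2) ℂ :=
  Matrix.vecMulVec (ψpure β γ) (fun q => starRingEnd ℂ (ψpure β γ q))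

/-- The maximally entangled state `|ψ⁺⟩ = (|00⟩ + |11⟩)/√2`. -/
def ψmax : Fin 2 × Fin 2 → ℂ := fun q =>
  if q.1 = q.2 then ((1 / Real.sqrt 2 : ℝ) : ℂ) else 0

/-- The two-qubit Werner state `ρ_W(p) = p |ψ⁺⟩⟨ψ⁺| + ((1-p)/4) 1`. -/
def ρWerner (p : ℝ) : Matrix (Fin 2 × Fin 2) (Fin 2 × Fin 2) ℂ :=
  (p : ℂ) • Matrix.vecMulVec ψmax (fun q => starRingEnd ℂ (ψmax q)) +
    (((1 - p) / 4 : ℝ) : ℂ) • 1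

/-- The canonical two-qubit state with magnetizations `mx my mz` (Alice),
`nx ny nz` (Bob) and diagonal correlators `Cxx Cyy Czz`. -/
def ρcan (mx my mz nx ny nz Cxx Cyy Czz : ℝ) :
    Matrix (Fin 2 × Fin 2) (Fin 2 × Fin 2) ℂ :=
  (1/4 : ℂ) • ((1 : Matrix (Fin 2 × Fin 2) (Fin 2 × Fin 2) ℂ)
    + (mx : ℂ) • (σx ⊗ₖ (1 : Matrix (Fin 2) (Fin 2) ℂ))
    + (my : ℂ) • (σy ⊗ₖ (1 : Matrix (Fin 2) (Fin 2) ℂ))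
    + (mz : ℂ) • (σz ⊗ₖ (1 : Matrix (Fin 2) (Fin 2) ℂ))
    + (nx : ℂ) • ((1 : Matrix (Fin 2) (Fin 2) ℂ) ⊗ₖ σx)
    + (ny : ℂ) • ((1 : Matrix (Fin 2) (Fin 2) ℂ) ⊗ₖ σy)
    + (nz : ℂ) • ((1 : Matrix (Fin 2) (Fin 2) ℂ) ⊗ₖ σz)
    + (Cxx : ℂ) • (σx ⊗ₖ σx)
    + (Cyy : ℂ) • (σy ⊗ₖ σy)
    + (Czz : ℂ) • (σz ⊗ₖ σz))

/-- Bob's reduced matrix: the partial trace over Alice's subsystem. -/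
def ptraceA (X : Matrix (Fin 2 × Fin 2) (Fin 2 × Fin 2) ℂ) :
    Matrix (Fin 2) (Fin 2) ℂ :=
  Matrix.of fun i j => ∑ k : Fin 2, X (k, i) (k, j)

/-- The trace distance `T(A,B) = (1/2) tr √((A-B)ᴴ (A-B))`, where the square
root is the positive semidefinite square root. -/
def psdSqrt {n : Type*} [Fintype n] [DecidableEq n] {M : Matrix n n ℂ}
    (hM : M.PosSemidef) : Matrix n n ℂ :=
  (hM.isHermitian.eigenvectorUnitary : Matrix n n ℂ) *
    diagonal ((↑) ∘ (√·) ∘ hM.isHermitian.eigenvalues) *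
    (star hM.isHermitian.eigenvectorUnitary : Matrix n n ℂ)

def traceDist (A B : Matrix (Fin 2) (Fin 2) ℂ) : ℝ :=
  (1/2) * ((psdSqrt (Matrix.posSemidef_conjTranspose_mul_self (A - B))).trace).re


section AuxTrace

variable (α mx my mz nx ny nz Cxx Cyy Czz : ℝ)

lemma trP : ((postPlus α (ρcan mx my mz nx ny nz Cxx Cyy Czz)).trace).re
    = 1 + (Real.sin α)^2 + 2*my*Real.sin α := by
  simp only [postPlus, ρcan, Upt, Apos, Aneg, σx, σy, σz, Matrix.trace,
    Matrix.diag, Matrix.mul_apply, Matrix.conjTranspose_apply,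
    Matrix.kroneckerMap_apply, Matrix.smul_apply, Matrix.add_apply,
    Matrix.one_apply, Fintype.sum_prod_type, Fin.sum_univ_two,
    Matrix.cons_val', Matrix.cons_val_zero, Matrix.cons_val_one,
    Matrix.head_cons, Matrix.head_fin_const, Matrix.empty_val',
    Matrix.cons_val_fin_one, Matrix.mul_one, mul_one]
  simp [Complex.ext_iff, Complex.sin_ofReal_re, Prod.ext_iff]
  ring

lemma trM : ((postMinus α (ρcan mx my mz nx ny nz Cxx Cyy Czz)).trace).re
    = 1 + (Real.sin α)^2 - 2*my*Real.sin α := by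
  simp only [postMinus, ρcan, Upt, Apos, Aneg, σx, σy, σz, Matrix.trace,
    Matrix.diag, Matrix.mul_apply, Matrix.conjTranspose_apply,
    Matrix.kroneckerMap_apply, Matrix.smul_apply, Matrix.add_apply,
    Matrix.one_apply, Fintype.sum_prod_type, Fin.sum_univ_two,
    Matrix.cons_val', Matrix.cons_val_zero, Matrix.cons_val_one,
    Matrix.head_cons, Matrix.head_fin_const, Matrix.empty_val',
    Matrix.cons_val_fin_one, Matrix.mul_one, mul_one]
  simp [Complex.ext_iff, Complex.sin_ofReal_re, Prod.ext_iff]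
  ring

lemma trNP : ((((1 : Matrix (Fin 2) (Fin 2) ℂ) ⊗ₖ Piy) *
      postPlus α (ρcan mx my mz nx ny nz Cxx Cyy Czz)).trace).re
    = (1 + (Real.sin α)^2 + 2*my*Real.sin α
        + (1 + (Real.sin α)^2)*ny + 2*Real.sin α*Cyy) / 2 := by
  simp only [postPlus, ρcan, Piy, Upt, Apos, Aneg, σx, σy, σz, Matrix.trace,
    Matrix.diag, Matrix.mul_apply, Matrix.conjTranspose_apply,
    Matrix.kroneckerMap_apply, Matrix.smul_apply, Matrix.add_apply,
    Matrix.one_apply, Fintype.sum_prod_type, Fin.sum_univ_two,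
    Matrix.cons_val', Matrix.cons_val_zero, Matrix.cons_val_one,
    Matrix.head_cons, Matrix.head_fin_const, Matrix.empty_val',
    Matrix.cons_val_fin_one, Matrix.mul_one, mul_one]
  simp [Complex.ext_iff, Complex.sin_ofReal_re, Prod.ext_iff]
  ring

lemma trNM : ((((1 : Matrix (Fin 2) (Fin 2) ℂ) ⊗ₖ Piy) *
      postMinus α (ρcan mx my mz nx ny nz Cxx Cyy Czz)).trace).re
    = (1 + (Real.sin α)^2 - 2*my*Real.sin α
        + (1 + (Real.sin α)^2)*ny - 2*Real.sin α*Cyy) / 2 := by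
  simp only [postMinus, ρcan, Piy, Upt, Apos, Aneg, σx, σy, σz, Matrix.trace,
    Matrix.diag, Matrix.mul_apply, Matrix.conjTranspose_apply,
    Matrix.kroneckerMap_apply, Matrix.smul_apply, Matrix.add_apply,
    Matrix.one_apply, Fintype.sum_prod_type, Fin.sum_univ_two,
    Matrix.cons_val', Matrix.cons_val_zero, Matrix.cons_val_one,
    Matrix.head_cons, Matrix.head_fin_const, Matrix.empty_val',
    Matrix.cons_val_fin_one, Matrix.mul_one, mul_one]
  simp [Complex.ext_iff, Complex.sin_ofReal_re, Prod.ext_iff]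
  ring

end AuxTrace

/-- For the canonical two-qubit state, Bob's `σy` outcome probabilities satisfy
`P₊(Π_y) − P₋(Π_y) = 2(Cyy − my m'y)(−3 + cos 2α) sin α /
((−3 + cos 2α + 4 my sin α)(1 + 2 my sin α + sin²α))`; in particular the
difference vanishes whenever `Cyy = my m'y`, hence whenever `Cyy = 0` and `my = 0`. -/
theorem stmt6 (α mx my mz nx ny nz Cxx Cyy Czz : ℝ)
    (ρ : Matrix (Fin 2 × Fin 2) (Fin 2 × Fin 2) ℂ)
    (hρ : ρ = ρcan mx my mz nx ny nz Cxx Cyy Czz)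
    (hpsd : ρ.PosSemidef)
    (hplus : ((postPlus α ρ).trace).re ≠ 0)
    (hminus : ((postMinus α ρ).trace).re ≠ 0) :
    Pplus α ρ Piy - Pminus α ρ Piy =
      2 * (Cyy - my * ny) * (-3 + Real.cos (2*α)) * Real.sin α /
        ((-3 + Real.cos (2*α) + 4 * my * Real.sin α) *
          (1 + 2 * my * Real.sin α + (Real.sin α)^2)) ∧
    (Cyy = my * ny → Pplus α ρ Piy - Pminus α ρ Piy = 0) ∧
    (Cyy = 0 → my = 0 → Pplus α ρ Piy - Pminus α ρ Piy = 0) := by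
  subst hρ
  set s := Real.sin α with hs
  have hc : Real.cos (2*α) = 1 - 2*s^2 := by
    rw [Real.cos_two_mul', ← Real.sin_sq_add_cos_sq α]; ring
  rw [trP α mx my mz nx ny nz Cxx Cyy Czz] at hplus
  rw [trM α mx my mz nx ny nz Cxx Cyy Czz] at hminus
  have key : Pplus α (ρcan mx my mz nx ny nz Cxx Cyy Czz) Piy
      - Pminus α (ρcan mx my mz nx ny nz Cxx Cyy Czz) Piy =
      2 * (Cyy - my * ny) * (-3 + Real.cos (2*α)) * s /
        ((-3 + Real.cos (2*α) + 4 * my * s) * (1 + 2 * my * s + s^2)) := by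
    rw [Pplus, Pminus, trP, trM, trNP, trNM, hc]
    have h2 : (-3 + (1 - 2*s^2) + 4*my*s) ≠ 0 := by
      intro h; apply hminus; linarith
    have h3 : (1 + 2*my*s + s^2) ≠ 0 := by
      intro h; apply hplus; linarith
    rw [← hs] at hplus hminus ⊢
    rw [div_div, div_div, div_sub_div _ _ (mul_ne_zero two_ne_zero hplus) (mul_ne_zero two_ne_zero hminus),
      div_eq_div_iff (mul_ne_zero (mul_ne_zero two_ne_zero hplus) (mul_ne_zero two_ne_zero hminus)) (mul_ne_zero h2 h3)]
    ring
  refine ⟨key, ?_, ?_⟩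
  · intro h; rw [key, h]; simp
  · intro h1 h2; rw [key, h1, h2]; simp
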